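/- Let r ≥ 2 and s ≥ 1. The set Σ := {ν_1−ν_2, …, ν_{s−1}−ν_s, ν_s−ε_1, ε_1−ε_2, …, ε_{r−1}−ε_r, ε_{r−1}+ε_r} is a base of the restricted root system Δ := {±ε_i±ε_j : 1 ≤ i < j ≤ r} ∪ {±ν_i±ν_j : 1 ≤ i < j ≤ s} ∪ {±2ν_j : 1 ≤ j ≤ s} ∪ {±ε_i±ν_j : 1 ≤ i ≤ r, 1 ≤ j ≤ s} of type D(r,s): Σ is linearly independent over ℝ and every element of Δ is either a non-negative or a non-positive integer combination of elements of Σ. (Δ is the restricted root system of the pair (osp(2r|4s), osp(r|2s)×osp(r|2s)).) -/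

import Mathlib

open Pointwise

/-- `NComb S` is the set of all finite linear combinations of elements of `S`
with non-negative integer coefficients, i.e. the additive submonoid generated by `S`. -/
def NComb {V : Type*} [AddCommMonoid V] (S : Set V) : Set V :=
  (AddSubmonoid.closure S : Set V)

/-- `B` is a base of `Δ`: `B ⊆ Δ`, `B` is linearly independent over `ℝ`, and
`Δ ⊆ ℕB ∪ (−ℕB)`. -/
def IsBase {V : Type*} [AddCommGroup V] [Module ℝ V] (Δ B : Set V) : Prop :=
  B ⊆ Δ ∧ LinearIndependent ℝ (fun x : B => (x : V)) ∧
    Δ ⊆ NComb B ∪ (-NComb B)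

/-- The `i`-th standard basis vector of `ℝⁿ` (indices are 0-based; junk value `0` out of range). -/
def bv (n i : ℕ) : Fin n → ℝ :=
  if h : i < n then Pi.single (⟨i, h⟩ : Fin n) 1 else 0

/-- The set `{1, -1}` of signs. -/
def pm : Set ℝ := {1, -1}
/-- The restricted root system `D(r,s) = {±ε_i±ε_j : i<j} ∪ {±ν_i±ν_j : i<j} ∪ {±2ν_j}
∪ {±ε_i±ν_j}` of the pair `(osp(2r|4s), osp(r|2s) × osp(r|2s))`, with `ε_i = bv (r+s) i`
for `0 ≤ i < r` (0-based) and `ν_j = bv (r+s) (r+j)` for `0 ≤ j < s`. -/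
def D18 (r s : ℕ) : Set (Fin (r + s) → ℝ) :=
  {x | ∃ a ∈ pm, ∃ b ∈ pm, ∃ i j : ℕ, i < j ∧ j < r ∧
      x = a • bv (r + s) i + b • bv (r + s) j} ∪
  {x | ∃ a ∈ pm, ∃ b ∈ pm, ∃ i j : ℕ, i < j ∧ j < s ∧
      x = a • bv (r + s) (r + i) + b • bv (r + s) (r + j)} ∪
  {x | ∃ a ∈ pm, ∃ j : ℕ, j < s ∧ x = (2 * a) • bv (r + s) (r + j)} ∪
  {x | ∃ a ∈ pm, ∃ b ∈ pm, ∃ i j : ℕ, i < r ∧ j < s ∧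
      x = a • bv (r + s) i + b • bv (r + s) (r + j)}

/-- The set `Σ = {ν_1−ν_2, …, ν_{s−1}−ν_s, ν_s−ε_1, ε_1−ε_2, …, ε_{r−1}−ε_r, ε_{r−1}+ε_r}`
(0-based indices). -/
def S18 (r s : ℕ) : Set (Fin (r + s) → ℝ) :=
  {x | ∃ j : ℕ, j + 1 < s ∧ x = bv (r + s) (r + j) - bv (r + s) (r + j + 1)} ∪
  {bv (r + s) (r + s - 1) - bv (r + s) 0} ∪
  {x | ∃ i : ℕ, i + 1 < r ∧ x = bv (r + s) i - bv (r + s) (i + 1)} ∪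
  {bv (r + s) (r - 2) + bv (r + s) (r - 1)}

section Aux
variable (r s : ℕ)

-- generators
lemma g1 {j : ℕ} (h : j + 1 < s) :
    bv (r+s) (r+j) - bv (r+s) (r+j+1) ∈ AddSubmonoid.closure (S18 r s) :=
  AddSubmonoid.subset_closure (Or.inl (Or.inl (Or.inl ⟨j, h, rfl⟩)))

lemma g2 : bv (r+s) (r+s-1) - bv (r+s) 0 ∈ AddSubmonoid.closure (S18 r s) :=
  AddSubmonoid.subset_closure (Or.inl (Or.inl (Or.inr rfl)))

lemma g3 {i : ℕ} (h : i + 1 < r) :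
    bv (r+s) i - bv (r+s) (i+1) ∈ AddSubmonoid.closure (S18 r s) :=
  AddSubmonoid.subset_closure (Or.inl (Or.inr ⟨i, h, rfl⟩))

lemma g4 : bv (r+s) (r-2) + bv (r+s) (r-1) ∈ AddSubmonoid.closure (S18 r s) :=
  AddSubmonoid.subset_closure (Or.inr rfl)

lemma L1 : ∀ d i : ℕ, i + d < r →
    bv (r+s) i - bv (r+s) (i+d) ∈ AddSubmonoid.closure (S18 r s) := by
  intro d
  induction d with
  | zero => intro i _; simpa using (AddSubmonoid.closure (S18 r s)).zero_mem
  | succ d ih =>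
      intro i h
      have h1 := ih i (by omega)
      have h2 := g3 r s (show i + d + 1 < r by omega)
      have := (AddSubmonoid.closure (S18 r s)).add_mem h1 h2
      have he : bv (r+s) i - bv (r+s) (i + (d+1)) =
          (bv (r+s) i - bv (r+s) (i+d)) + (bv (r+s) (i+d) - bv (r+s) (i+d+1)) := by
        abel
      rwa [he]

lemma L1' {i j : ℕ} (hij : i ≤ j) (hj : j < r) :
    bv (r+s) i - bv (r+s) j ∈ AddSubmonoid.closure (S18 r s) := by
  have := L1 r s (j - i) i (by omega)
  rwa [show i + (j - i) = j by omega] at this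

lemma L2 (hr : 2 ≤ r) : ∀ d i : ℕ, i + d = r - 2 →
    bv (r+s) i + bv (r+s) (r-1) ∈ AddSubmonoid.closure (S18 r s) := by
  intro d
  induction d with
  | zero => intro i h; simp only [Nat.add_zero] at h; rw [h]; exact g4 r s
  | succ d ih =>
      intro i h
      have h1 := g3 r s (show i + 1 < r by omega)
      have h2 := ih (i+1) (by omega)
      have := (AddSubmonoid.closure (S18 r s)).add_mem h1 h2
      have he : bv (r+s) i + bv (r+s) (r-1) =
          (bv (r+s) i - bv (r+s) (i+1)) + (bv (r+s) (i+1) + bv (r+s) (r-1)) := by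
        abel
      rwa [he]

lemma L3 (hr : 2 ≤ r) {i j : ℕ} (hi : i ≤ r - 2) (hj : j ≤ r - 1) :
    bv (r+s) i + bv (r+s) j ∈ AddSubmonoid.closure (S18 r s) := by
  have h1 := L1' r s hj (show r - 1 < r by omega)
  have h2 := L2 r s hr (r - 2 - i) i (by omega)
  have := (AddSubmonoid.closure (S18 r s)).add_mem h1 h2
  have he : bv (r+s) i + bv (r+s) j =
      (bv (r+s) j - bv (r+s) (r-1)) + (bv (r+s) i + bv (r+s) (r-1)) := by abel
  rwa [he]

lemma L4 (hs : 1 ≤ s) : ∀ d j : ℕ, j + d = s - 1 →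
    bv (r+s) (r+j) - bv (r+s) 0 ∈ AddSubmonoid.closure (S18 r s) := by
  intro d
  induction d with
  | zero =>
      intro j h
      simp only [Nat.add_zero] at h
      rw [h, show r + (s - 1) = r + s - 1 by omega]
      exact g2 r s
  | succ d ih =>
      intro j h
      have h1 := g1 r s (show j + 1 < s by omega)
      have h2 := ih (j+1) (by omega)
      have := (AddSubmonoid.closure (S18 r s)).add_mem h1 h2
      have he : bv (r+s) (r+j) - bv (r+s) 0 =
          (bv (r+s) (r+j) - bv (r+s) (r+j+1)) + (bv (r+s) (r+j+1) - bv (r+s) 0) := by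
        abel
      rwa [he]

lemma L4' (hs : 1 ≤ s) {j : ℕ} (hj : j < s) :
    bv (r+s) (r+j) - bv (r+s) 0 ∈ AddSubmonoid.closure (S18 r s) :=
  L4 r s hs (s - 1 - j) j (by omega)

lemma L5 : ∀ d i : ℕ, i + d < s →
    bv (r+s) (r+i) - bv (r+s) (r+i+d) ∈ AddSubmonoid.closure (S18 r s) := by
  intro d
  induction d with
  | zero => intro i _; simpa using (AddSubmonoid.closure (S18 r s)).zero_mem
  | succ d ih =>
      intro i h
      have h1 := g1 r s (show i + 1 < s by omega)
      have h2 := ih (i+1) (by omega)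
      have he : bv (r+s) (r+i) - bv (r+s) (r+i+(d+1)) =
          (bv (r+s) (r+i) - bv (r+s) (r+i+1)) + (bv (r+s) (r+(i+1)) - bv (r+s) (r+(i+1)+d)) := by
        rw [show r+i+(d+1) = r+(i+1)+d by omega, show r+i+1 = r+(i+1) by omega]
        abel
      rw [he]
      exact (AddSubmonoid.closure (S18 r s)).add_mem h1 h2

end Aux

noncomputable def fam (r s : ℕ) (k : Fin (r+s)) : Fin (r+s) → ℝ :=
  if k.1 + 1 < s then bv (r+s) (r+k.1) - bv (r+s) (r+k.1+1)
  else if k.1 + 1 = s then bv (r+s) (r+s-1) - bv (r+s) 0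
  else if k.1 + 1 < s + r then bv (r+s) (k.1-s) - bv (r+s) (k.1-s+1)
  else bv (r+s) (r-2) + bv (r+s) (r-1)

lemma fam_mk (r s : ℕ) (m : ℕ) (h : m < r + s) :
    fam r s ⟨m, h⟩ =
      if m + 1 < s then bv (r+s) (r+m) - bv (r+s) (r+m+1)
      else if m + 1 = s then bv (r+s) (r+s-1) - bv (r+s) 0
      else if m + 1 < s + r then bv (r+s) (m-s) - bv (r+s) (m-s+1)
      else bv (r+s) (r-2) + bv (r+s) (r-1) := rfl

lemma fam_range (r s : ℕ) (hr : 2 ≤ r) (hs : 1 ≤ s) :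
    Set.range (fam r s) = S18 r s := by
  ext x
  constructor
  · rintro ⟨⟨m, hm⟩, rfl⟩
    rw [fam_mk]
    split_ifs with h1 h2 h3
    · exact Or.inl (Or.inl (Or.inl ⟨m, h1, rfl⟩))
    · exact Or.inl (Or.inl (Or.inr rfl))
    · exact Or.inl (Or.inr ⟨m - s, by omega, rfl⟩)
    · exact Or.inr rfl
  · rintro (((⟨j, hj, rfl⟩ | hx) | ⟨i, hi, rfl⟩) | hx)
    · exact ⟨⟨j, by omega⟩, by rw [fam_mk, if_pos hj]⟩
    · refine ⟨⟨s-1, by omega⟩, ?_⟩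
      rw [fam_mk, if_neg (by omega), if_pos (by omega)]
      exact hx.symm
    · refine ⟨⟨s+i, by omega⟩, ?_⟩
      rw [fam_mk, if_neg (by omega), if_neg (by omega), if_pos (by omega),
        show s + i - s = i by omega]
    · refine ⟨⟨s+r-1, by omega⟩, ?_⟩
      rw [fam_mk, if_neg (by omega), if_neg (by omega), if_neg (by omega)]
      exact hx.symm

lemma fam_span (r s : ℕ) (hr : 2 ≤ r) (hs : 1 ≤ s) :
    ⊤ ≤ Submodule.span ℝ (Set.range (fam r s)) := by
  set W := Submodule.span ℝ (Set.range (fam r s)) with hW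
  have hmem : ∀ k : Fin (r+s), fam r s k ∈ W := fun k =>
    Submodule.subset_span (Set.mem_range_self k)
  have hδ : bv (r+s) (r-2) + bv (r+s) (r-1) ∈ W := by
    have := hmem ⟨s+r-1, by omega⟩
    rwa [fam_mk, if_neg (by omega), if_neg (by omega), if_neg (by omega)] at this
  have hγ : ∀ i : ℕ, i + 1 < r → bv (r+s) i - bv (r+s) (i+1) ∈ W := by
    intro i hi
    have := hmem ⟨s+i, by omega⟩
    rwa [fam_mk, if_neg (by omega), if_neg (by omega), if_pos (by omega),
      show s + i - s = i by omega] at this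
  have hlast : bv (r+s) (r-1) ∈ W := by
    have hγ' := hγ (r-2) (by omega)
    rw [show r - 2 + 1 = r - 1 by omega] at hγ'
    have h := W.smul_mem (1/2 : ℝ) (W.sub_mem hδ hγ')
    have he : bv (r+s) (r-1) = (1/2 : ℝ) •
        ((bv (r+s) (r-2) + bv (r+s) (r-1)) - (bv (r+s) (r-2) - bv (r+s) (r-1))) := by
      module
    rwa [he]
  have hε : ∀ d i : ℕ, i + d = r - 1 → bv (r+s) i ∈ W := by
    intro d
    induction d with
    | zero => intro i h; simp only [Nat.add_zero] at h; rwa [h]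
    | succ d ih =>
        intro i h
        have h1 := hγ i (by omega)
        have h2 := ih (i+1) (by omega)
        have := W.add_mem h1 h2
        rwa [sub_add_cancel] at this
  have hε' : ∀ i : ℕ, i < r → bv (r+s) i ∈ W := fun i hi => hε (r-1-i) i (by omega)
  have hν : ∀ d j : ℕ, j + d = s - 1 → bv (r+s) (r+j) ∈ W := by
    intro d
    induction d with
    | zero =>
        intro j h
        simp only [Nat.add_zero] at h
        subst h
        have hb : bv (r+s) (r+(s-1)) - bv (r+s) 0 ∈ W := by
          have := hmem ⟨s-1, by omega⟩
          rwa [fam_mk, if_neg (by omega), if_pos (by omega),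
            show r + s - 1 = r + (s-1) by omega] at this
        have := W.add_mem hb (hε' 0 (by omega))
        rwa [sub_add_cancel] at this
    | succ d ih =>
        intro j h
        have h1 : bv (r+s) (r+j) - bv (r+s) (r+j+1) ∈ W := by
          have := hmem ⟨j, by omega⟩
          rwa [fam_mk, if_pos (by omega)] at this
        have h2 := ih (j+1) (by omega)
        rw [show r + (j+1) = r + j + 1 by omega] at h2
        have := W.add_mem h1 h2
        rwa [sub_add_cancel] at this
  rw [← (Pi.basisFun ℝ (Fin (r+s))).span_eq, Submodule.span_le]
  rintro x ⟨i, rfl⟩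
  have hb : (Pi.basisFun ℝ (Fin (r+s))) i = bv (r+s) i.1 := by
    rw [bv, dif_pos i.2]
    simp [Pi.basisFun_apply]
  rw [hb]
  rcases lt_or_ge i.1 r with h | h
  · exact hε' i.1 h
  · have := hν (s - 1 - (i.1 - r)) (i.1 - r) (by omega)
    rwa [show r + (i.1 - r) = i.1 by omega] at this

lemma S18_li (r s : ℕ) (hr : 2 ≤ r) (hs : 1 ≤ s) :
    LinearIndependent ℝ (fun x : S18 r s => (x : Fin (r+s) → ℝ)) := by
  have hli : LinearIndependent ℝ (fam r s) := by
    apply linearIndependent_of_top_le_span_of_card_eq_finrank (fam_span r s hr hs)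
    simp [Module.finrank_fin_fun]
  have : LinearIndependent ℝ (fun x : Set.range (fam r s) => (x : Fin (r+s) → ℝ)) :=
    hli.linearIndepOn_id
  rwa [fam_range r s hr hs] at this


lemma L5' (r s : ℕ) {i j : ℕ} (hij : i ≤ j) (hj : j < s) :
    bv (r+s) (r+i) - bv (r+s) (r+j) ∈ AddSubmonoid.closure (S18 r s) := by
  have := L5 r s (j - i) i (by omega)
  rwa [show r + i + (j - i) = r + j by omega] at this

lemma mem_pos (r s : ℕ) {x y : Fin (r+s) → ℝ}
    (hy : y ∈ AddSubmonoid.closure (S18 r s)) (h : x = y) :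
    x ∈ NComb (S18 r s) ∪ -(NComb (S18 r s)) :=
  Or.inl (show x ∈ AddSubmonoid.closure (S18 r s) from h ▸ hy)

lemma mem_neg (r s : ℕ) {x y : Fin (r+s) → ℝ}
    (hy : y ∈ AddSubmonoid.closure (S18 r s)) (h : x = -y) :
    x ∈ NComb (S18 r s) ∪ -(NComb (S18 r s)) :=
  Or.inr (Set.mem_neg.2 (show -x ∈ AddSubmonoid.closure (S18 r s) by
    rw [h, neg_neg]; exact hy))



/-- `Σ` is a base of the restricted root system of type `D(r,s)`. -/
theorem statement18 (r s : ℕ) (hr : 2 ≤ r) (hs : 1 ≤ s) :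
    IsBase (D18 r s) (S18 r s) := by
  have h1pm : (1:ℝ) ∈ pm := Or.inl rfl
  have hmpm : (-1:ℝ) ∈ pm := Or.inr rfl
  refine ⟨?_, S18_li r s hr hs, ?_⟩
  · rintro x (((⟨j, hj, rfl⟩ | rfl) | ⟨i, hi, rfl⟩) | rfl)
    · refine Or.inl (Or.inl (Or.inr ⟨1, h1pm, -1, hmpm, j, j+1, by omega, hj, ?_⟩))
      rw [show r + (j+1) = r + j + 1 by omega]; module
    · refine Or.inr ⟨-1, hmpm, 1, h1pm, 0, s-1, by omega, by omega, ?_⟩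
      rw [show r + (s-1) = r + s - 1 by omega]; module
    · exact Or.inl (Or.inl (Or.inl ⟨1, h1pm, -1, hmpm, i, i+1, by omega, hi, by module⟩))
    · exact Or.inl (Or.inl (Or.inl ⟨1, h1pm, 1, h1pm, r-2, r-1, by omega, by omega, by module⟩))
  · set M := AddSubmonoid.closure (S18 r s) with hM
    rintro x (((⟨a, ha, b, hb, i, j, hij, hj, rfl⟩ | ⟨a, ha, b, hb, i, j, hij, hj, rfl⟩) |
      ⟨a, ha, j, hj, rfl⟩) | ⟨a, ha, b, hb, i, j, hi, hj, rfl⟩)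
    · -- ±ε_i ± ε_j, i < j < r
      rcases ha with rfl | rfl <;> rcases hb with rfl | rfl
      · exact mem_pos r s (L3 r s hr (show i ≤ r-2 by omega) (show j ≤ r-1 by omega))
          (by module)
      · exact mem_pos r s (L1' r s hij.le hj) (by module)
      · exact mem_neg r s (L1' r s hij.le hj) (by module)
      · exact mem_neg r s (L3 r s hr (show i ≤ r-2 by omega) (show j ≤ r-1 by omega))
          (by module)
    · -- ±ν_i ± ν_j, i < j < s
      have h00 : bv (r+s) 0 + bv (r+s) 0 ∈ M := L3 r s hr (by omega) (by omega)
      have hnn : bv (r+s) (r+i) + bv (r+s) (r+j) ∈ M := by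
        have := M.add_mem (L4' r s hs (show i < s by omega))
          (M.add_mem (L4' r s hs hj) h00)
        rwa [show (bv (r+s) (r+i) - bv (r+s) 0) +
            ((bv (r+s) (r+j) - bv (r+s) 0) + (bv (r+s) 0 + bv (r+s) 0)) =
            bv (r+s) (r+i) + bv (r+s) (r+j) by module] at this
      rcases ha with rfl | rfl <;> rcases hb with rfl | rfl
      · exact mem_pos r s hnn (by module)
      · exact mem_pos r s (L5' r s hij.le hj) (by module)
      · exact mem_neg r s (L5' r s hij.le hj) (by module)
      · exact mem_neg r s hnn (by module)
    · -- ±2ν_j, j < s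
      have h00 : bv (r+s) 0 + bv (r+s) 0 ∈ M := L3 r s hr (by omega) (by omega)
      have h2ν : bv (r+s) (r+j) + bv (r+s) (r+j) ∈ M := by
        have := M.add_mem (L4' r s hs hj) (M.add_mem (L4' r s hs hj) h00)
        rwa [show (bv (r+s) (r+j) - bv (r+s) 0) +
            ((bv (r+s) (r+j) - bv (r+s) 0) + (bv (r+s) 0 + bv (r+s) 0)) =
            bv (r+s) (r+j) + bv (r+s) (r+j) by module] at this
      rcases ha with rfl | rfl
      · exact mem_pos r s h2ν (by module)
      · exact mem_neg r s h2ν (by module)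
    · -- ±ε_i ± ν_j, i < r, j < s
      have hp : bv (r+s) i + bv (r+s) (r+j) ∈ M := by
        have := M.add_mem (L4' r s hs hj) (L3 r s hr (show 0 ≤ r-2 by omega)
          (show i ≤ r-1 by omega))
        rwa [show (bv (r+s) (r+j) - bv (r+s) 0) + (bv (r+s) 0 + bv (r+s) i) =
            bv (r+s) i + bv (r+s) (r+j) by module] at this
      have hm : bv (r+s) (r+j) - bv (r+s) i ∈ M := by
        have := M.add_mem (L4' r s hs hj) (L1' r s (show 0 ≤ i by omega) hi)
        rwa [show (bv (r+s) (r+j) - bv (r+s) 0) + (bv (r+s) 0 - bv (r+s) i) =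
            bv (r+s) (r+j) - bv (r+s) i by module] at this
      rcases ha with rfl | rfl <;> rcases hb with rfl | rfl
      · exact mem_pos r s hp (by module)
      · exact mem_neg r s hm (by module)
      · exact mem_pos r s hm (by module)
      · exact mem_neg r s hp (by module)
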